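/- For k, m ≥ 2, the J-class J_t of elements of POI_{k×m} of rank tm has exactly binom(k,t)² · (m!)^t elements, for each 0 ≤ t ≤ k. -/
import Mathlib


noncomputable section

namespace POIPaper

instance pequivMonoid (α : Type*) : Monoid (α ≃. α) where
  one := PEquiv.refl α
  mul f g := f.trans g
  mul_assoc := PEquiv.trans_assoc
  one_mul := PEquiv.refl_trans
  mul_one := PEquiv.trans_refl

/-- `f` is `P`-stable for the ordered partition of `Ω` given by the block-index map `ι`. -/
def PStable {Ω : Type*} {k : ℕ} (ι : Ω → Fin k) (f : Ω ≃. Ω) : Prop :=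
  ∀ x y : Ω, y ∈ f x →
    (∀ z, ι z = ι x → (f z).isSome) ∧
    (∀ z w, w ∈ f z → ι z = ι x → ι w = ι y) ∧
    (∀ w, ι w = ι y → ∃ z, ι z = ι x ∧ w ∈ f z)

/-- `f` is `P`-order preserving for the ordered partition given by `ι`. -/
def POrdPres {Ω : Type*} {k : ℕ} (ι : Ω → Fin k) (f : Ω ≃. Ω) : Prop :=
  ∀ x y x' y' : Ω, x' ∈ f x → y' ∈ f y → ι x ≤ ι y → ι x' ≤ ι y'

/-- The set `POI(Ω,P)` of all `P`-stable and `P`-order preserving partial permutations. -/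
def POISet {Ω : Type*} {k : ℕ} (ι : Ω → Fin k) : Set (Ω ≃. Ω) :=
  {f | PStable ι f ∧ POrdPres ι f}

/-- Block index map of the uniform interval partition of `{1,...,km}` into `k` blocks of size `m`. -/
def blk (k m : ℕ) (a : Fin (k * m)) : Fin k :=
  ⟨(a : ℕ) / m, by
    have ha := a.isLt
    rcases Nat.eq_zero_or_pos m with h | h
    · subst h; simp at ha
    · rw [Nat.div_lt_iff_lt_mul h]; omega⟩

/-- The monoid `POI_{k×m}` (as a subset of the monoid of partial permutations). -/
def POIkm (k m : ℕ) : Set (Fin (k * m) ≃. Fin (k * m)) := POISet (blk k m)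

/-- The cardinality of the image of a partial permutation. -/
def imCard {n : ℕ} (f : Fin n ≃. Fin n) : ℕ := Set.ncard {b | (f.symm b).isSome}

/-- The `J`-preorder of the monoid `POI_{k×m}`: `α ≤_J β` iff `α ∈ M β M`. -/
def leJ (k m : ℕ) (α β : Fin (k * m) ≃. Fin (k * m)) : Prop :=
  ∃ s ∈ POIkm k m, ∃ t ∈ POIkm k m, α = s * β * t

/-- Order preserving partial permutations of a chain. -/
def OrdPres {n : ℕ} (f : Fin n ≃. Fin n) : Prop :=
  ∀ x y x' y' : Fin n, x' ∈ f x → y' ∈ f y → x ≤ y → x' ≤ y'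

/-- The group of units of `POI_{k×m}`: elements with full domain and image. -/
def unitsSet (k m : ℕ) : Set (Fin (k * m) ≃. Fin (k * m)) :=
  {f | f ∈ POIkm k m ∧ (∀ a, (f a).isSome) ∧ (∀ b, (f.symm b).isSome)}

def pack {k m : ℕ} (i : Fin k) (r : Fin m) : Fin (k * m) :=
  ⟨(i : ℕ) * m + r, by
    calc (i : ℕ) * m + r < (i : ℕ) * m + m := by omega
      _ = ((i : ℕ) + 1) * m := by ring
      _ ≤ k * m := Nat.mul_le_mul_right m i.isLt⟩

lemma m_pos {k m : ℕ} (a : Fin (k * m)) : 0 < m := by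
  have h1 : 0 < k * m := lt_of_le_of_lt (Nat.zero_le _) a.isLt
  exact Nat.pos_of_ne_zero fun h => by rw [h, Nat.mul_zero] at h1; omega

def res {k m : ℕ} (a : Fin (k * m)) : Fin m :=
  ⟨(a : ℕ) % m, Nat.mod_lt _ (m_pos a)⟩

@[simp] lemma blk_pack {k m : ℕ} (i : Fin k) (r : Fin m) : blk k m (pack i r) = i := by
  have hm : 0 < m := lt_of_le_of_lt (Nat.zero_le _) r.2
  apply Fin.ext
  show ((i : ℕ) * m + r) / m = i
  rw [Nat.mul_comm, Nat.mul_add_div hm, Nat.div_eq_of_lt r.2, Nat.add_zero]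

@[simp] lemma res_pack {k m : ℕ} (i : Fin k) (r : Fin m) : res (pack i r) = r := by
  apply Fin.ext
  show ((i : ℕ) * m + r) % m = r
  rw [Nat.mul_comm, Nat.mul_add_mod, Nat.mod_eq_of_lt r.2]

@[simp] lemma pack_blk_res {k m : ℕ} (a : Fin (k * m)) : pack (blk k m a) (res a) = a := by
  apply Fin.ext
  show ((a : ℕ) / m) * m + (a : ℕ) % m = a
  rw [Nat.mul_comm]
  exact Nat.div_add_mod _ _

lemma pack_injective {k m : ℕ} {i i' : Fin k} {r r' : Fin m}
    (h : pack i r = pack i' r') : i = i' ∧ r = r' := by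
  constructor
  · have := congrArg (blk k m) h; simpa using this
  · have := congrArg (res (k := k)) h; simpa using this

section Encode

variable {k m t : ℕ}

/-- Index of `i` in `S`. -/
def idx (S : Finset (Fin k)) (hS : S.card = t) (i : Fin k) (h : i ∈ S) : Fin t :=
  (S.orderIsoOfFin hS).symm ⟨i, h⟩

@[simp] lemma emb_idx (S : Finset (Fin k)) (hS : S.card = t) (i : Fin k) (h : i ∈ S) :
    S.orderEmbOfFin hS (idx S hS i h) = i := by
  rw [← Finset.coe_orderIsoOfFin_apply, idx, OrderIso.apply_symm_apply]

@[simp] lemma idx_emb (S : Finset (Fin k)) (hS : S.card = t) (j : Fin t)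
    (h : S.orderEmbOfFin hS j ∈ S) : idx S hS (S.orderEmbOfFin hS j) h = j := by
  rw [idx]
  have : (⟨S.orderEmbOfFin hS j, h⟩ : {x // x ∈ S}) = S.orderIsoOfFin hS j :=
    Subtype.ext (by rw [Finset.coe_orderIsoOfFin_apply])
  rw [this, OrderIso.symm_apply_apply]

def encAux (S T : Finset (Fin k)) (hS : S.card = t) (hT : T.card = t)
    (σ : Fin t → Equiv.Perm (Fin m)) (a : Fin (k * m)) : Option (Fin (k * m)) :=
  if h : blk k m a ∈ S then
    some (pack (T.orderEmbOfFin hT (idx S hS _ h)) (σ (idx S hS _ h) (res a)))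
  else none

lemma encAux_flip {S T : Finset (Fin k)} {hS : S.card = t} {hT : T.card = t}
    {σ : Fin t → Equiv.Perm (Fin m)} {a b : Fin (k * m)}
    (hab : b ∈ encAux S T hS hT σ a) :
    a ∈ encAux T S hT hS (fun j => (σ j).symm) b := by
  rw [encAux] at hab
  by_cases h : blk k m a ∈ S
  · rw [dif_pos h] at hab
    simp only [Option.mem_def, Option.some_inj] at hab
    subst hab
    rw [encAux]
    have hmem : blk k m (pack (T.orderEmbOfFin hT (idx S hS _ h))
        (σ (idx S hS _ h) (res a))) ∈ T := by
      rw [blk_pack]; exact Finset.orderEmbOfFin_mem _ _ _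
    rw [dif_pos hmem]
    simp only [Option.mem_def, Option.some_inj]
    have hidx : idx T hT _ hmem = idx S hS _ h := by
      have : idx T hT (blk k m (pack (T.orderEmbOfFin hT (idx S hS _ h))
          (σ (idx S hS _ h) (res a)))) hmem
          = idx T hT (T.orderEmbOfFin hT (idx S hS _ h))
            (by rw [blk_pack] at hmem; exact hmem) := by
        congr 1 <;> rw [blk_pack]
      rw [this, idx_emb]
    rw [hidx]
    simp only [res_pack, Equiv.symm_apply_apply, emb_idx]
    exact pack_blk_res a
  · rw [dif_neg h] at hab; exact absurd hab (by simp)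

def encode (d : ({S : Finset (Fin k) // S.card = t} × {T : Finset (Fin k) // T.card = t}
    × (Fin t → Equiv.Perm (Fin m)))) : Fin (k * m) ≃. Fin (k * m) where
  toFun := encAux d.1.1 d.2.1.1 d.1.2 d.2.1.2 d.2.2
  invFun := encAux d.2.1.1 d.1.1 d.2.1.2 d.1.2 (fun j => (d.2.2 j).symm)
  inv a b := by
    constructor
    · intro h
      simpa using encAux_flip h
    · exact encAux_flip

end Encode


section Props

variable {k m t : ℕ}

lemma idx_congr {S : Finset (Fin k)} {hS : S.card = t} {i i' : Fin k} (h : i ∈ S) (h' : i' ∈ S)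
    (hii : i = i') : idx S hS i h = idx S hS i' h' := by subst hii; rfl

lemma isSome_encAux {S T : Finset (Fin k)} {hS : S.card = t} {hT : T.card = t}
    {σ : Fin t → Equiv.Perm (Fin m)} {a : Fin (k * m)} :
    (encAux S T hS hT σ a).isSome ↔ blk k m a ∈ S := by
  rw [encAux]; by_cases h : blk k m a ∈ S <;> simp [h]

lemma mem_encAux {S T : Finset (Fin k)} {hS : S.card = t} {hT : T.card = t}
    {σ : Fin t → Equiv.Perm (Fin m)} {a b : Fin (k * m)} (h : blk k m a ∈ S) :
    b ∈ encAux S T hS hT σ a ↔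
      b = pack (T.orderEmbOfFin hT (idx S hS _ h)) (σ (idx S hS _ h) (res a)) := by
  rw [encAux, dif_pos h]; simp [eq_comm]

lemma encode_apply (d : ({S : Finset (Fin k) // S.card = t} × {T : Finset (Fin k) // T.card = t}
    × (Fin t → Equiv.Perm (Fin m)))) (a : Fin (k * m)) :
    encode d a = encAux d.1.1 d.2.1.1 d.1.2 d.2.1.2 d.2.2 a := rfl

lemma encode_symm_apply (d : ({S : Finset (Fin k) // S.card = t}
    × {T : Finset (Fin k) // T.card = t} × (Fin t → Equiv.Perm (Fin m)))) (b : Fin (k * m)) :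
    (encode d).symm b = encAux d.2.1.1 d.1.1 d.2.1.2 d.1.2 (fun j => (d.2.2 j).symm) b := rfl

lemma encode_stable (d : ({S : Finset (Fin k) // S.card = t}
    × {T : Finset (Fin k) // T.card = t} × (Fin t → Equiv.Perm (Fin m)))) :
    PStable (blk k m) (encode d) := by
  obtain ⟨⟨S, hS⟩, ⟨T, hT⟩, σ⟩ := d
  intro x y hxy
  rw [encode_apply] at hxy
  have hx : blk k m x ∈ S := isSome_encAux.1 (Option.isSome_iff_exists.2 ⟨y, hxy⟩)
  rw [mem_encAux hx] at hxy
  have hbly : blk k m y = T.orderEmbOfFin hT (idx S hS _ hx) := by rw [hxy, blk_pack]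
  refine ⟨?_, ?_, ?_⟩
  · intro z hz
    rw [encode_apply]
    exact isSome_encAux.2 (hz ▸ hx)
  · intro z w hw hz
    rw [encode_apply] at hw
    have hz' : blk k m z ∈ S := hz ▸ hx
    rw [mem_encAux hz'] at hw
    rw [hw, blk_pack, hbly, idx_congr hz' hx hz]
  · intro w hw
    have hz' : blk k m (pack (blk k m x) ((σ (idx S hS _ hx)).symm (res w))) ∈ S := by
      rw [blk_pack]; exact hx
    refine ⟨pack (blk k m x) ((σ (idx S hS _ hx)).symm (res w)), by rw [blk_pack], ?_⟩
    rw [encode_apply, mem_encAux hz']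
    rw [idx_congr hz' hx (by rw [blk_pack]), res_pack, Equiv.apply_symm_apply, ← hbly, ← hw,
      pack_blk_res]

lemma encode_ordPres (d : ({S : Finset (Fin k) // S.card = t}
    × {T : Finset (Fin k) // T.card = t} × (Fin t → Equiv.Perm (Fin m)))) :
    POrdPres (blk k m) (encode d) := by
  obtain ⟨⟨S, hS⟩, ⟨T, hT⟩, σ⟩ := d
  intro x y x' y' hx' hy' hxy
  rw [encode_apply] at hx' hy'
  have hx : blk k m x ∈ S := isSome_encAux.1 (Option.isSome_iff_exists.2 ⟨x', hx'⟩)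
  have hy : blk k m y ∈ S := isSome_encAux.1 (Option.isSome_iff_exists.2 ⟨y', hy'⟩)
  rw [mem_encAux hx] at hx'
  rw [mem_encAux hy] at hy'
  rw [hx', hy', blk_pack, blk_pack]
  apply (T.orderEmbOfFin hT).monotone
  apply ((S.orderIsoOfFin hS).symm).monotone
  exact Subtype.mk_le_mk.2 hxy

def blockEquiv {k m : ℕ} (T : Finset (Fin k)) :
    {b : Fin (k * m) // blk k m b ∈ T} ≃ T × Fin m where
  toFun b := (⟨blk k m b.1, b.2⟩, res b.1)
  invFun p := ⟨pack p.1.1 p.2, by simp⟩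
  left_inv b := Subtype.ext (by simp)
  right_inv p := by simp [Prod.ext_iff, Subtype.ext_iff]

lemma ncard_blocks {k m : ℕ} (T : Finset (Fin k)) :
    Set.ncard {b : Fin (k * m) | blk k m b ∈ T} = T.card * m := by
  rw [← Nat.card_coe_set_eq]
  have h1 : Nat.card ↑{b : Fin (k * m) | blk k m b ∈ T} = Nat.card (T × Fin m) :=
    Nat.card_congr (blockEquiv T)
  rw [h1, Nat.card_prod, Nat.card_eq_finsetCard, Nat.card_eq_fintype_card, Fintype.card_fin]

lemma encode_imCard (d : ({S : Finset (Fin k) // S.card = t}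
    × {T : Finset (Fin k) // T.card = t} × (Fin t → Equiv.Perm (Fin m)))) :
    imCard (encode d) = t * m := by
  have : {b | ((encode d).symm b).isSome} = {b : Fin (k * m) | blk k m b ∈ d.2.1.1} := by
    ext b
    rw [Set.mem_setOf_eq, Set.mem_setOf_eq, encode_symm_apply, isSome_encAux]
  rw [imCard, this, ncard_blocks, d.2.1.2]

lemma PStable.symm {Ω : Type*} {k : ℕ} {ι : Ω → Fin k} {f : Ω ≃. Ω} (hst : PStable ι f) :
    PStable ι f.symm := by
  intro x y hxy
  rw [PEquiv.mem_iff_mem] at hxy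
  obtain ⟨h1, h2, h3⟩ := hst y x hxy
  refine ⟨?_, ?_, ?_⟩
  · intro z hz
    obtain ⟨w, hw, hwz⟩ := h3 z hz
    exact Option.isSome_iff_exists.2 ⟨w, (PEquiv.mem_iff_mem f).2 hwz⟩
  · intro z w hw hz
    obtain ⟨z', hz', hzz'⟩ := h3 z hz
    have h1' : w ∈ f.symm z := hw
    have h2' : z' ∈ f.symm z := (PEquiv.mem_iff_mem f).2 hzz'
    have : w = z' := by
      rw [Option.mem_def] at h1' h2'
      exact Option.some_injective _ (h1'.symm.trans h2')
    rw [this, hz']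
  · intro w hw
    have hsome : (f w).isSome := h1 w hw
    obtain ⟨z, hz⟩ := Option.isSome_iff_exists.1 hsome
    exact ⟨z, h2 w z hz hw, (PEquiv.mem_iff_mem f).2 hz⟩

lemma dom_block {Ω : Type*} {k : ℕ} {ι : Ω → Fin k} {f : Ω ≃. Ω} (hst : PStable ι f)
    {x z : Ω} (hx : (f x).isSome) (hz : ι z = ι x) : (f z).isSome := by
  obtain ⟨y, hy⟩ := Option.isSome_iff_exists.1 hx
  exact (hst x y hy).1 z hz

end Props

section Main

variable {k m t : ℕ}

lemma encode_injective (hm : 0 < m) :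
    Function.Injective (encode : ({S : Finset (Fin k) // S.card = t}
      × {T : Finset (Fin k) // T.card = t} × (Fin t → Equiv.Perm (Fin m))) → _) := by
  intro d d' h
  obtain ⟨⟨S, hS⟩, ⟨T, hT⟩, σ⟩ := d
  obtain ⟨⟨S', hS'⟩, ⟨T', hT'⟩, σ'⟩ := d'
  have hSS : S = S' := by
    ext i
    have h2 : ((encode (⟨S, hS⟩, ⟨T, hT⟩, σ) (pack i ⟨0, hm⟩)).isSome : Prop)
        ↔ (encode (⟨S', hS'⟩, ⟨T', hT'⟩, σ') (pack i ⟨0, hm⟩)).isSome := by rw [h]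
    simpa only [encode_apply, isSome_encAux, blk_pack] using h2
  have hTT : T = T' := by
    ext i
    have h2 : (((encode (⟨S, hS⟩, ⟨T, hT⟩, σ)).symm (pack i ⟨0, hm⟩)).isSome : Prop)
        ↔ ((encode (⟨S', hS'⟩, ⟨T', hT'⟩, σ')).symm (pack i ⟨0, hm⟩)).isSome := by rw [h]
    simpa only [encode_symm_apply, isSome_encAux, blk_pack] using h2
  subst hSS; subst hTT
  have hσ : σ = σ' := by
    funext j
    apply Equiv.ext
    intro r
    have hmem : blk k m (pack (S.orderEmbOfFin hS j) r) ∈ S := by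
      rw [blk_pack]; exact Finset.orderEmbOfFin_mem _ _ _
    have h2 := congrArg (fun f : Fin (k * m) ≃. Fin (k * m) =>
      f (pack (S.orderEmbOfFin hS j) r)) h
    simp only [encode_apply, encAux, dif_pos hmem, Option.some_inj] at h2
    simp only [blk_pack, res_pack, idx_emb] at h2
    exact (pack_injective h2).2
  subst hσ
  rfl

lemma encode_surjective (hm : 0 < m) {α : Fin (k * m) ≃. Fin (k * m)}
    (hα : α ∈ POIkm k m) (hc : imCard α = t * m) :
    ∃ d : ({S : Finset (Fin k) // S.card = t}
      × {T : Finset (Fin k) // T.card = t} × (Fin t → Equiv.Perm (Fin m))),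
      encode d = α := by
  classical
  obtain ⟨hst, hord⟩ := hα
  have hsymm : PStable (blk k m) α.symm := hst.symm
  set z0 : Fin m := ⟨0, hm⟩ with hz0
  set S : Finset (Fin k) := Finset.univ.filter (fun i => (α (pack i z0)).isSome) with hSdef
  set T : Finset (Fin k) := Finset.univ.filter (fun i => (α.symm (pack i z0)).isSome) with hTdef
  have domS : ∀ a : Fin (k * m), (α a).isSome ↔ blk k m a ∈ S := by
    intro a
    simp only [hSdef, Finset.mem_filter, Finset.mem_univ, true_and]
    constructor
    · intro h; exact dom_block hst h (by rw [blk_pack])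
    · intro h; exact dom_block hst h (by rw [blk_pack])
  have domT : ∀ b : Fin (k * m), (α.symm b).isSome ↔ blk k m b ∈ T := by
    intro b
    simp only [hTdef, Finset.mem_filter, Finset.mem_univ, true_and]
    constructor
    · intro h; exact dom_block hsymm h (by rw [blk_pack])
    · intro h; exact dom_block hsymm h (by rw [blk_pack])
  have hTcard : T.card = t := by
    have h1 : {b : Fin (k * m) | (α.symm b).isSome} = {b : Fin (k * m) | blk k m b ∈ T} :=
      Set.ext fun b => domT b
    have h2 := hc
    rw [imCard, h1, ncard_blocks] at h2
    exact Nat.eq_of_mul_eq_mul_right hm h2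
  -- domain membership for points over S
  have hdomS : ∀ (i : Fin k), i ∈ S → ∀ r : Fin m, (α (pack i r)).isSome := by
    intro i hi r
    rw [domS, blk_pack]
    exact hi
  -- image block is well defined and injective
  have blkval : ∀ (i : Fin k) (hi : i ∈ S) (r : Fin m),
      blk k m ((α (pack i r)).get (hdomS i hi r)) = blk k m ((α (pack i z0)).get (hdomS i hi z0)) := by
    intro i hi r
    exact (hst (pack i z0) _ (Option.get_mem _)).2.1 (pack i r) _ (Option.get_mem _)
      (by rw [blk_pack, blk_pack])
  have blkinj : ∀ (i₁ : Fin k) (h₁ : i₁ ∈ S) (i₂ : Fin k) (h₂ : i₂ ∈ S),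
      blk k m ((α (pack i₁ z0)).get (hdomS i₁ h₁ z0))
        = blk k m ((α (pack i₂ z0)).get (hdomS i₂ h₂ z0)) → i₁ = i₂ := by
    intro i₁ h₁ i₂ h₂ heq
    obtain ⟨z, hz, hmem⟩ := (hst (pack i₁ z0) _ (Option.get_mem (hdomS i₁ h₁ z0))).2.2
      ((α (pack i₂ z0)).get (hdomS i₂ h₂ z0)) heq.symm
    have hz2 : z = pack i₂ z0 := α.inj hmem (Option.get_mem _)
    have h6 := hz.symm.trans (congrArg (blk k m) hz2)
    rwa [blk_pack, blk_pack] at h6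
  have blkmemT : ∀ (i : Fin k) (hi : i ∈ S),
      blk k m ((α (pack i z0)).get (hdomS i hi z0)) ∈ T := by
    intro i hi
    rw [← domT]
    exact Option.isSome_iff_exists.2 ⟨pack i z0, (PEquiv.mem_iff_mem α).2 (Option.get_mem _)⟩
  have hScard : S.card = t := by
    rw [← hTcard]
    apply Finset.card_bij (fun i hi => blk k m ((α (pack i z0)).get (hdomS i hi z0)))
      blkmemT blkinj
    intro b hb
    have hbs : (α.symm (pack b z0)).isSome := by
      rw [domT, blk_pack]; exact hb
    set x : Fin (k * m) := (α.symm (pack b z0)).get hbs with hx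
    have hmem : pack b z0 ∈ α x := (PEquiv.mem_iff_mem α).1 (Option.get_mem hbs)
    have hxS : blk k m x ∈ S := by
      rw [← domS]
      exact Option.isSome_iff_exists.2 ⟨pack b z0, hmem⟩
    refine ⟨blk k m x, hxS, ?_⟩
    have := (hst x (pack b z0) hmem).2.1 (pack (blk k m x) z0) _
      (Option.get_mem (hdomS _ hxS z0)) (by rw [blk_pack])
    rw [this, blk_pack]
  -- the block map agrees with the order embedding of T
  have hmemS : ∀ j : Fin t, S.orderEmbOfFin hScard j ∈ S :=
    fun j => Finset.orderEmbOfFin_mem S hScard j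
  have hfT : ∀ j : Fin t,
      blk k m ((α (pack (S.orderEmbOfFin hScard j) z0)).get
        (hdomS _ (hmemS j) z0)) ∈ T :=
    fun j => blkmemT _ (hmemS j)
  have hmono : Monotone (fun j : Fin t =>
      blk k m ((α (pack (S.orderEmbOfFin hScard j) z0)).get
        (hdomS _ (hmemS j) z0))) := by
    intro j j' hj
    exact hord (pack (S.orderEmbOfFin hScard j) z0) (pack (S.orderEmbOfFin hScard j') z0) _ _
      (Option.get_mem _) (Option.get_mem _)
      (by rw [blk_pack, blk_pack]; exact (S.orderEmbOfFin hScard).monotone hj)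
  have hinj : Function.Injective (fun j : Fin t =>
      blk k m ((α (pack (S.orderEmbOfFin hScard j) z0)).get
        (hdomS _ (hmemS j) z0))) := by
    intro j j' hj
    exact (S.orderEmbOfFin hScard).injective (blkinj _ (hmemS j) _ (hmemS j') hj)
  have hf : (fun j : Fin t =>
      blk k m ((α (pack (S.orderEmbOfFin hScard j) z0)).get
        (hdomS _ (hmemS j) z0))) = T.orderEmbOfFin hTcard :=
    Finset.orderEmbOfFin_unique hTcard hfT (hmono.strictMono_of_injective hinj)
  -- within block permutations
  have ginj : ∀ j : Fin t, Function.Injective (fun r : Fin m =>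
      res ((α (pack (S.orderEmbOfFin hScard j) r)).get
        (hdomS _ (hmemS j) r))) := by
    intro j r₁ r₂ hr
    simp only at hr
    have hblk : blk k m ((α (pack (S.orderEmbOfFin hScard j) r₁)).get
          (hdomS _ (hmemS j) r₁))
        = blk k m ((α (pack (S.orderEmbOfFin hScard j) r₂)).get
          (hdomS _ (hmemS j) r₂)) := by
      rw [blkval _ (hmemS j) r₁, blkval _ (hmemS j) r₂]
    have hy : ((α (pack (S.orderEmbOfFin hScard j) r₁)).get
          (hdomS _ (hmemS j) r₁))
        = ((α (pack (S.orderEmbOfFin hScard j) r₂)).get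
          (hdomS _ (hmemS j) r₂)) := by
      rw [← pack_blk_res ((α (pack (S.orderEmbOfFin hScard j) r₁)).get _),
        ← pack_blk_res ((α (pack (S.orderEmbOfFin hScard j) r₂)).get _), hblk, hr]
    have := α.inj (hy ▸ Option.get_mem (hdomS _ (Finset.orderEmbOfFin_mem S hScard j) r₁))
      (Option.get_mem (hdomS _ (hmemS j) r₂))
    exact (pack_injective this).2
  set σ : Fin t → Equiv.Perm (Fin m) := fun j => Equiv.ofBijective _
    (Finite.injective_iff_bijective.1 (ginj j)) with hσdef
  refine ⟨⟨⟨S, hScard⟩, ⟨T, hTcard⟩, σ⟩, ?_⟩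
  apply PEquiv.ext
  intro a
  rw [encode_apply]
  by_cases h : blk k m a ∈ S
  · simp only [encAux, dif_pos h]
    have hemb : S.orderEmbOfFin hScard (idx S hScard _ h) = blk k m a := emb_idx S hScard _ h
    have hpa : pack (S.orderEmbOfFin hScard (idx S hScard _ h)) (res a) = a := by
      rw [hemb, pack_blk_res]
    have hsome : (α a).isSome := (domS a).2 h
    obtain ⟨y, hy⟩ := Option.isSome_iff_exists.1 hsome
    have hys : σ (idx S hScard _ h) (res a) = res y := by
      show res ((α (pack (S.orderEmbOfFin hScard (idx S hScard _ h)) (res a))).get _) = res y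
      simp only [hpa]
      simp [hy]
    have hyt : T.orderEmbOfFin hTcard (idx S hScard _ h) = blk k m y := by
      rw [← hf]
      exact (hst a y hy).2.1 _ _ (Option.get_mem _) (by rw [blk_pack, hemb])
    rw [hy, hys, hyt, pack_blk_res]
  · simp only [encAux, dif_neg h]
    have : ¬ (α a).isSome := fun hs => h ((domS a).1 hs)
    rw [Option.not_isSome_iff_eq_none] at this
    exact this.symm

end Main

/-- for `k, m ≥ 2` and `0 ≤ t ≤ k`, the `J`-class of elements of `POI_{k×m}`
of rank `t·m` has exactly `C(k,t)² (m!)^t` elements. -/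
theorem stmt8 (k m : ℕ) (hk : 2 ≤ k) (hm : 2 ≤ m) (t : ℕ) (ht : t ≤ k) :
    Set.ncard {α | α ∈ POIkm k m ∧ imCard α = t * m} =
      (k.choose t) ^ 2 * (Nat.factorial m) ^ t := by
  classical
  have hm0 : 0 < m := by omega
  have key : {α | α ∈ POIkm k m ∧ imCard α = t * m}
      = Set.range (encode : ({S : Finset (Fin k) // S.card = t}
        × {T : Finset (Fin k) // T.card = t} × (Fin t → Equiv.Perm (Fin m))) → _) := by
    ext α
    constructor
    · rintro ⟨hα, hc⟩
      exact encode_surjective hm0 hα hc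
    · rintro ⟨d, rfl⟩
      exact ⟨⟨encode_stable d, encode_ordPres d⟩, encode_imCard d⟩
  rw [key, ← Nat.card_coe_set_eq, Nat.card_range_of_injective (encode_injective hm0),
    Nat.card_eq_fintype_card]
  simp only [Fintype.card_prod, Fintype.card_finset_len, Fintype.card_fin, Fintype.card_fun,
    Fintype.card_perm]
  ring

end POIPaper
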